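/- Let Z > 0 and λ ∈ (0,1). For ρ ≥ 1 define α(ρ) = (1/2)·arccos(e^{−Z/ρ}), β(ρ) = (1/2)·arcsin((1 − 2λ)·sin(2·α(ρ))), and θ(ρ) = −2·(1 − λ)·log(cos(α(ρ) − β(ρ))) − 2·λ·log(cos(α(ρ) + β(ρ))). Then ρ·θ(ρ) tends to 2·λ·(1 − λ)·Z as ρ → ∞. -/

import Mathlib

noncomputable def gfun (lam x : ℝ) : ℝ :=
  -(1 - lam) * Real.log ((1 + Real.exp (-x) *
      Real.sqrt (1 - (1 - 2*lam)^2 * (1 - Real.exp (-x)^2))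
      + (1 - 2*lam) * (1 - Real.exp (-x)^2)) / 2)
  - lam * Real.log ((1 + Real.exp (-x) *
      Real.sqrt (1 - (1 - 2*lam)^2 * (1 - Real.exp (-x)^2))
      - (1 - 2*lam) * (1 - Real.exp (-x)^2)) / 2)

lemma theta_eq (lam : ℝ) (hlam0 : 0 < lam) (hlam1 : lam < 1) {x : ℝ} (hx : 0 ≤ x) :
    (let α : ℝ := (1 / 2) * Real.arccos (Real.exp (-x))
     let β : ℝ := (1 / 2) * Real.arcsin ((1 - 2 * lam) * Real.sin (2 * α))
     (-2 * (1 - lam) * Real.log (Real.cos (α - β))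
       - 2 * lam * Real.log (Real.cos (α + β)))) = gfun lam x := by
  set c := Real.exp (-x) with hc
  have hc0 : 0 < c := Real.exp_pos _
  have hc1 : c ≤ 1 := by
    rw [hc, show (1:ℝ) = Real.exp 0 by simp]
    exact Real.exp_le_exp.mpr (by linarith)
  have h1c2 : (0:ℝ) ≤ 1 - c^2 := by nlinarith
  set α : ℝ := (1 / 2) * Real.arccos c with hα
  have h2a : 2 * α = Real.arccos c := by rw [hα]; ring
  have hcos2a : Real.cos (2*α) = c := by rw [h2a]; exact Real.cos_arccos (by linarith) hc1
  have hsin2a : Real.sin (2*α) = Real.sqrt (1 - c^2) := by rw [h2a]; exact Real.sin_arccos c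
  set t : ℝ := (1 - 2*lam) * Real.sin (2 * α) with htdef
  set β : ℝ := (1 / 2) * Real.arcsin t with hβ
  have h2b : 2 * β = Real.arcsin t := by rw [hβ]; ring
  have hs0 : 0 ≤ Real.sqrt (1 - c^2) := Real.sqrt_nonneg _
  have hs1 : Real.sqrt (1 - c^2) ≤ 1 := by
    calc Real.sqrt (1 - c^2) ≤ Real.sqrt 1 := Real.sqrt_le_sqrt (by nlinarith)
    _ = 1 := Real.sqrt_one
  have ht1 : -1 ≤ t := by rw [htdef, hsin2a]; nlinarith
  have ht2 : t ≤ 1 := by rw [htdef, hsin2a]; nlinarith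
  have hsin2b : Real.sin (2*β) = t := by rw [h2b]; exact Real.sin_arcsin ht1 ht2
  have hcos2b : Real.cos (2*β) = Real.sqrt (1 - (1 - 2*lam)^2 * (1 - c^2)) := by
    rw [h2b, Real.cos_arcsin]
    congr 1
    rw [htdef, hsin2a, mul_pow, Real.sq_sqrt h1c2]
  set w : ℝ := Real.sqrt (1 - (1 - 2*lam)^2 * (1 - c^2)) with hw
  have hA : Real.cos (α - β)^2 = (1 + c * w + (1 - 2*lam)*(1 - c^2))/2 := by
    rw [Real.cos_sq, show 2*(α - β) = 2*α - 2*β by ring, Real.cos_sub,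
      hcos2a, hsin2a, hcos2b, hsin2b, htdef, hsin2a,
      show Real.sqrt (1-c^2) * ((1 - 2*lam) * Real.sqrt (1-c^2))
        = (1 - 2*lam) * (Real.sqrt (1-c^2) * Real.sqrt (1-c^2)) by ring,
      Real.mul_self_sqrt h1c2]
    ring
  have hB : Real.cos (α + β)^2 = (1 + c * w - (1 - 2*lam)*(1 - c^2))/2 := by
    rw [Real.cos_sq, show 2*(α + β) = 2*α + 2*β by ring, Real.cos_add,
      hcos2a, hsin2a, hcos2b, hsin2b, htdef, hsin2a,
      show Real.sqrt (1-c^2) * ((1 - 2*lam) * Real.sqrt (1-c^2))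
        = (1 - 2*lam) * (Real.sqrt (1-c^2) * Real.sqrt (1-c^2)) by ring,
      Real.mul_self_sqrt h1c2]
    ring
  have lA : Real.log ((1 + c * w + (1 - 2*lam)*(1 - c^2))/2)
      = 2 * Real.log (Real.cos (α - β)) := by
    rw [← hA]
    simpa using Real.log_pow 2 (Real.cos (α - β))
  have lB : Real.log ((1 + c * w - (1 - 2*lam)*(1 - c^2))/2)
      = 2 * Real.log (Real.cos (α + β)) := by
    rw [← hB]
    simpa using Real.log_pow 2 (Real.cos (α + β))
  show -2 * (1 - lam) * Real.log (Real.cos (α - β))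
       - 2 * lam * Real.log (Real.cos (α + β)) = gfun lam x
  rw [gfun]
  rw [← hc]
  have hfix : (1 - (1 - 2*lam)^2 * (1 - c^2)) = (1 - (1 - 2*lam)^2 * (1 - c^2)) := rfl
  rw [show (1 + c * Real.sqrt (1 - (1 - 2*lam)^2 * (1 - c^2)) + (1 - 2*lam) * (1 - c^2))/2
      = (1 + c * w + (1 - 2*lam)*(1 - c^2))/2 by rw [hw],
    show (1 + c * Real.sqrt (1 - (1 - 2*lam)^2 * (1 - c^2)) - (1 - 2*lam) * (1 - c^2))/2
      = (1 + c * w - (1 - 2*lam)*(1 - c^2))/2 by rw [hw], lA, lB]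
  ring
lemma gfun_zero (lam : ℝ) : gfun lam 0 = 0 := by
  simp [gfun]

lemma gfun_deriv (lam : ℝ) : HasDerivAt (gfun lam) (2 * lam * (1 - lam)) 0 := by
  have h1 : HasDerivAt (fun x : ℝ => Real.exp (-x)) (-1) 0 := by
    simpa using (hasDerivAt_neg (0:ℝ)).exp
  have hsq : HasDerivAt (fun x : ℝ => Real.exp (-x) ^ 2) (-2) 0 := by
    have h := h1.fun_pow 2
    refine h.congr_deriv ?_
    norm_num
  have hs2 : HasDerivAt (fun x : ℝ => 1 - Real.exp (-x) ^ 2) 2 0 := by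
    simpa using hsq.const_sub 1
  have hinner : HasDerivAt (fun x : ℝ => 1 - (1 - 2*lam)^2 * (1 - Real.exp (-x)^2))
      (-((1 - 2*lam)^2 * 2)) 0 := by
    simpa using (hs2.const_mul ((1 - 2*lam)^2)).const_sub 1
  have hw : HasDerivAt (fun x : ℝ => Real.sqrt (1 - (1 - 2*lam)^2 * (1 - Real.exp (-x)^2)))
      (-((1 - 2*lam)^2)) 0 := by
    have h := hinner.sqrt (by norm_num)
    convert h using 1
    simp only [neg_zero, Real.exp_zero, one_pow, sub_self, mul_zero, sub_zero, Real.sqrt_one]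
    ring
  have hcw : HasDerivAt (fun x : ℝ => Real.exp (-x) *
      Real.sqrt (1 - (1 - 2*lam)^2 * (1 - Real.exp (-x)^2)))
      (-1 - (1 - 2*lam)^2) 0 := by
    have h := h1.fun_mul hw
    refine h.congr_deriv ?_
    simp only [neg_zero, Real.exp_zero, one_pow, sub_self, mul_zero, sub_zero, Real.sqrt_one]
    ring
  have hA : HasDerivAt (fun x : ℝ => (1 + Real.exp (-x) *
      Real.sqrt (1 - (1 - 2*lam)^2 * (1 - Real.exp (-x)^2))
      + (1 - 2*lam) * (1 - Real.exp (-x)^2)) / 2)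
      ((-1 - (1 - 2*lam)^2 + (1 - 2*lam) * 2) / 2) 0 :=
    (((hcw.const_add 1).add (hs2.const_mul (1 - 2*lam))).div_const 2)
  have hB : HasDerivAt (fun x : ℝ => (1 + Real.exp (-x) *
      Real.sqrt (1 - (1 - 2*lam)^2 * (1 - Real.exp (-x)^2))
      - (1 - 2*lam) * (1 - Real.exp (-x)^2)) / 2)
      ((-1 - (1 - 2*lam)^2 - (1 - 2*lam) * 2) / 2) 0 :=
    (((hcw.const_add 1).sub (hs2.const_mul (1 - 2*lam))).div_const 2)
  have hlogA : HasDerivAt (fun x : ℝ => Real.log ((1 + Real.exp (-x) *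
      Real.sqrt (1 - (1 - 2*lam)^2 * (1 - Real.exp (-x)^2))
      + (1 - 2*lam) * (1 - Real.exp (-x)^2)) / 2))
      ((-1 - (1 - 2*lam)^2 + (1 - 2*lam) * 2) / 2) 0 := by
    have h := hA.log (by norm_num)
    convert h using 1
    simp only [neg_zero, Real.exp_zero, one_pow, sub_self, mul_zero, sub_zero, Real.sqrt_one]
    norm_num
  have hlogB : HasDerivAt (fun x : ℝ => Real.log ((1 + Real.exp (-x) *
      Real.sqrt (1 - (1 - 2*lam)^2 * (1 - Real.exp (-x)^2))
      - (1 - 2*lam) * (1 - Real.exp (-x)^2)) / 2))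
      ((-1 - (1 - 2*lam)^2 - (1 - 2*lam) * 2) / 2) 0 := by
    have h := hB.log (by norm_num)
    convert h using 1
    simp only [neg_zero, Real.exp_zero, one_pow, sub_self, mul_zero, sub_zero, Real.sqrt_one]
    norm_num
  have h := (hlogA.const_mul (-(1 - lam))).sub (hlogB.const_mul lam)
  have heq : HasDerivAt (gfun lam)
      (-(1 - lam) * ((-1 - (1 - 2*lam)^2 + (1 - 2*lam) * 2) / 2)
        - lam * ((-1 - (1 - 2*lam)^2 - (1 - 2*lam) * 2) / 2)) 0 := h
  convert heq using 1
  ring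

/-- Asymptotics of the binary umbrella bound: with `α(ρ) = (1/2) arccos(e^{−Z/ρ})`,
`β(ρ) = (1/2) arcsin((1−2λ) sin 2α(ρ))` and
`θ(ρ) = −2(1−λ) log cos(α−β) − 2λ log cos(α+β)`, one has
`ρ·θ(ρ) → 2λ(1−λ)Z` as `ρ → ∞`. -/
theorem stmt11 (Z lam : ℝ) (hZ : 0 < Z) (hlam0 : 0 < lam) (hlam1 : lam < 1) :
    Filter.Tendsto
      (fun ρ : ℝ =>
        ρ * (let α : ℝ := (1 / 2) * Real.arccos (Real.exp (-Z / ρ))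
             let β : ℝ := (1 / 2) * Real.arcsin ((1 - 2 * lam) * Real.sin (2 * α))
             (-2 * (1 - lam) * Real.log (Real.cos (α - β))
               - 2 * lam * Real.log (Real.cos (α + β)))))
      Filter.atTop (nhds (2 * lam * (1 - lam) * Z)) := by
  have hd := gfun_deriv lam
  rw [hasDerivAt_iff_tendsto_slope] at hd
  have h0 : Filter.Tendsto (fun ρ : ℝ => Z / ρ) Filter.atTop (nhds 0) := by
    simpa [div_eq_mul_inv] using tendsto_inv_atTop_zero.const_mul Z
  have hmap : Filter.Tendsto (fun ρ : ℝ => Z / ρ) Filter.atTop (nhdsWithin 0 {(0:ℝ)}ᶜ) := by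
    rw [tendsto_nhdsWithin_iff]
    refine ⟨h0, ?_⟩
    filter_upwards [Filter.eventually_gt_atTop (0:ℝ)] with ρ hρ
    exact ne_of_gt (div_pos hZ hρ)
  have hslope := hd.comp hmap
  have hmain : Filter.Tendsto (fun ρ : ℝ => Z * slope (gfun lam) 0 (Z / ρ))
      Filter.atTop (nhds (Z * (2 * lam * (1 - lam)))) := hslope.const_mul Z
  rw [show 2 * lam * (1 - lam) * Z = Z * (2 * lam * (1 - lam)) by ring]
  refine hmain.congr' ?_
  filter_upwards [Filter.eventually_gt_atTop (0:ℝ)] with ρ hρ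
  have hx : (0:ℝ) ≤ Z / ρ := le_of_lt (div_pos hZ hρ)
  have hth := theta_eq lam hlam0 hlam1 hx
  simp only [slope_def_field, gfun_zero, sub_zero]
  rw [← hth]
  rw [show -Z / ρ = -(Z / ρ) by ring] at *
  simp only []
  field_simp
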